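/- Let T ≥ 1, let X_1, …, X_T be random variables taking values in finite sets, let f_1, …, f_T be deterministic real-valued functions, set R_t = f_t(X_t) and Z = ∑_{k=1}^T R_k. Fix t, and assume additionally that R_t is conditionally independent of (X_{t+1}, …, X_T) given (X_1, …, X_{t−1}). Then I(Z ; X_t | X_{−t}) = H(R_t | X_1, …, X_{t−1}). (Paper's Proposition 1: the information of the joint policy of team T_i at time t, I(Z(τ_{T_i}) ; τ_{T_i}^t | τ_{T_i}^{−t}), equals the entropy of the team reward at time t given the team-wide joint trajectory up to time t−1, H(TR_{i[n]}^t | τ_{T_i}^{1:t−1}).) -/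

import Mathlib

open MeasureTheory ProbabilityTheory Filter

/-- `prOf X a = ℙ(X = a)`, the probability mass of a random variable at a point. -/
noncomputable def prOf {Ω : Type*} [MeasureSpace Ω] {α : Type*} (X : Ω → α) (a : α) : ℝ :=
  ((ℙ : Measure Ω) {ω | X ω = a}).toReal

/-- Conditional Shannon entropy
`H(X | Y) = ∑_y ℙ(Y = y) (−∑_x ℙ(X = x | Y = y) log ℙ(X = x | Y = y))`,
with `ℙ(X = x | Y = y) = ℙ(X = x ∧ Y = y) / ℙ(Y = y)` and the conventions `0 log 0 = 0`
and `x / 0 = 0`.  Stated with `tsum` so that it applies to random variables into arbitrary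
types; for random variables with finitely many values of positive probability (the only case
used here) it agrees with the usual finite sum. -/
noncomputable def condEntropy' {Ω : Type*} [MeasureSpace Ω] {α β : Type*}
    (X : Ω → α) (Y : Ω → β) : ℝ :=
  ∑' y : β, prOf Y y *
    (-∑' x : α, (prOf (fun ω => (X ω, Y ω)) (x, y) / prOf Y y) *
        Real.log (prOf (fun ω => (X ω, Y ω)) (x, y) / prOf Y y))

/-- Conditional mutual information `I(U ; V | W) = H(U | W) − H(U | V, W)`. -/
noncomputable def condMutualInfo' {Ω : Type*} [MeasureSpace Ω] {α β γ : Type*}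
    (U : Ω → α) (V : Ω → β) (W : Ω → γ) : ℝ :=
  condEntropy' U W - condEntropy' U (fun ω => (V ω, W ω))

lemma prOf_congr {Ω : Type*} [MeasureSpace Ω] {α β : Type*} {X : Ω → α} {Y : Ω → β} {a : α}
    {b : β} (h : {ω | X ω = a} = {ω | Y ω = b}) : prOf X a = prOf Y b := by
  unfold prOf; rw [h]

lemma condEntropy'_comp {Ω : Type*} [MeasureSpace Ω] {α β : Type*} (g : β → α) (Y : Ω → β) :
    condEntropy' (fun ω => g (Y ω)) Y = 0 := by
  simp only [condEntropy']
  refine Eq.trans (tsum_congr fun y => ?_) tsum_zero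
  have hinner : ∀ x : α,
      (prOf (fun ω => (g (Y ω), Y ω)) (x, y) / prOf Y y) *
        Real.log (prOf (fun ω => (g (Y ω), Y ω)) (x, y) / prOf Y y) = 0 := by
    intro x
    by_cases hx : x = g y
    · subst hx
      have h1 : prOf (fun ω => (g (Y ω), Y ω)) (g y, y) = prOf Y y := by
        apply prOf_congr
        ext ω
        simp only [Set.mem_setOf_eq, Prod.mk.injEq]
        exact ⟨fun h => h.2, fun h => ⟨by rw [h], h⟩⟩
      rw [h1]
      by_cases hy : prOf Y y = 0
      · simp [hy]
      · rw [div_self hy, Real.log_one, mul_zero]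
    · have h1 : prOf (fun ω => (g (Y ω), Y ω)) (x, y) = 0 := by
        have hempty : {ω | (fun ω => (g (Y ω), Y ω)) ω = (x, y)} = (∅ : Set Ω) := by
          ext ω
          simp only [Set.mem_setOf_eq, Prod.mk.injEq, Set.mem_empty_iff_false, iff_false,
            not_and]
          intro h1 h2
          exact hx (by rw [← h1, h2])
        unfold prOf; rw [hempty]; simp
      rw [h1, zero_div, zero_mul]
  have h0 : (∑' x : α, (prOf (fun ω => (g (Y ω), Y ω)) (x, y) / prOf Y y) *
      Real.log (prOf (fun ω => (g (Y ω), Y ω)) (x, y) / prOf Y y)) = 0 :=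
    (tsum_congr fun x => hinner x).trans tsum_zero
  rw [h0, neg_zero, mul_zero]

lemma condEntropy'_add_fun {Ω : Type*} [MeasureSpace Ω] {β : Type*}
    (R : Ω → ℝ) (g : β → ℝ) (Y : Ω → β) :
    condEntropy' (fun ω => R ω + g (Y ω)) Y = condEntropy' R Y := by
  simp only [condEntropy']
  refine tsum_congr fun y => ?_
  congr 2
  have key : ∀ x : ℝ, prOf (fun ω => (R ω + g (Y ω), Y ω)) (x, y)
      = prOf (fun ω => (R ω, Y ω)) (x - g y, y) := by
    intro x
    apply prOf_congr
    ext ω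
    simp only [Set.mem_setOf_eq, Prod.mk.injEq]
    constructor
    · rintro ⟨h1, h2⟩
      rw [h2] at h1
      exact ⟨by linarith, h2⟩
    · rintro ⟨h1, h2⟩
      refine ⟨by rw [h2]; linarith, h2⟩
  calc (∑' x : ℝ, (prOf (fun ω => (R ω + g (Y ω), Y ω)) (x, y) / prOf Y y) *
          Real.log (prOf (fun ω => (R ω + g (Y ω), Y ω)) (x, y) / prOf Y y))
      = ∑' x : ℝ, (fun x' => (prOf (fun ω => (R ω, Y ω)) (x', y) / prOf Y y) *
          Real.log (prOf (fun ω => (R ω, Y ω)) (x', y) / prOf Y y))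
            ((Equiv.subRight (g y)) x) := by
        refine tsum_congr fun x => ?_
        simp only [Equiv.subRight_apply]
        rw [key x]
    _ = _ := (Equiv.subRight (g y)).tsum_eq
          (fun x' => (prOf (fun ω => (R ω, Y ω)) (x', y) / prOf Y y) *
            Real.log (prOf (fun ω => (R ω, Y ω)) (x', y) / prOf Y y))

lemma condEntropy'_comp_inj {Ω : Type*} [MeasureSpace Ω] {α β γ : Type*}
    (R : Ω → α) (Y : Ω → β) (u : β → γ) (hu : Function.Injective u) :
    condEntropy' R (fun ω => u (Y ω)) = condEntropy' R Y := by
  simp only [condEntropy']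
  refine Eq.trans (hu.tsum_eq ?_).symm (tsum_congr fun b => ?_)
  · intro c hc
    simp only [Function.mem_support] at hc
    by_contra hrange
    have hempty : {ω | (fun ω => u (Y ω)) ω = c} = (∅ : Set Ω) := by
      ext ω
      simp only [Set.mem_setOf_eq, Set.mem_empty_iff_false, iff_false]
      intro h
      exact hrange ⟨Y ω, h⟩
    have h0 : prOf (fun ω => u (Y ω)) c = 0 := by
      unfold prOf; rw [hempty]; simp
    rw [h0, zero_mul] at hc
    exact hc rfl
  · have h1 : prOf (fun ω => u (Y ω)) (u b) = prOf Y b := by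
      apply prOf_congr
      ext ω
      simp only [Set.mem_setOf_eq]
      exact ⟨fun h => hu h, fun h => by rw [h]⟩
    have h2 : ∀ x : α, prOf (fun ω => (R ω, u (Y ω))) (x, u b)
        = prOf (fun ω => (R ω, Y ω)) (x, b) := by
      intro x
      apply prOf_congr
      ext ω
      simp only [Set.mem_setOf_eq, Prod.mk.injEq]
      exact ⟨fun h => ⟨h.1, hu h.2⟩, fun h => ⟨h.1, by rw [h.2]⟩⟩
    rw [h1]
    congr 2
    exact tsum_congr fun x => by rw [h2 x]

lemma condEntropy'_of_condIndep {Ω : Type*} [MeasureSpace Ω]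
    [IsProbabilityMeasure (ℙ : Measure Ω)]
    {β γ : Type*} [Fintype β] [Fintype γ]
    (R : Ω → ℝ) (V : Ω → β) (W : Ω → γ)
    (hmeas : ∀ (v : β) (w : γ), MeasurableSet {ω | V ω = v ∧ W ω = w})
    (hci : ∀ (r : ℝ) (v : β) (w : γ),
      (ℙ : Measure Ω) {ω | R ω = r ∧ V ω = v ∧ W ω = w} * (ℙ : Measure Ω) {ω | W ω = w}
        = (ℙ : Measure Ω) {ω | R ω = r ∧ W ω = w}
          * (ℙ : Measure Ω) {ω | V ω = v ∧ W ω = w}) :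
    condEntropy' R (fun ω => (V ω, W ω)) = condEntropy' R W := by
  classical
  -- abbreviations
  have epair : ∀ (v : β) (w : γ), prOf (fun ω => (V ω, W ω)) (v, w)
      = ((ℙ : Measure Ω) {ω | V ω = v ∧ W ω = w}).toReal := by
    intro v w
    unfold prOf
    have h : {ω | (fun ω => (V ω, W ω)) ω = (v, w)} = {ω | V ω = v ∧ W ω = w} := by
      ext ω; simp [Prod.ext_iff]
    rw [h]
  have etrip : ∀ (r : ℝ) (v : β) (w : γ), prOf (fun ω => (R ω, (V ω, W ω))) (r, (v, w))
      = ((ℙ : Measure Ω) {ω | R ω = r ∧ V ω = v ∧ W ω = w}).toReal := by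
    intro r v w
    unfold prOf
    have h : {ω | (fun ω => (R ω, (V ω, W ω))) ω = (r, (v, w))}
        = {ω | R ω = r ∧ V ω = v ∧ W ω = w} := by
      ext ω; simp [Prod.ext_iff, and_assoc]
    rw [h]
  have erw : ∀ (r : ℝ) (w : γ), prOf (fun ω => (R ω, W ω)) (r, w)
      = ((ℙ : Measure Ω) {ω | R ω = r ∧ W ω = w}).toReal := by
    intro r w
    unfold prOf
    have h : {ω | (fun ω => (R ω, W ω)) ω = (r, w)} = {ω | R ω = r ∧ W ω = w} := by
      ext ω; simp [Prod.ext_iff]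
    rw [h]
  -- marginal
  have hmarg : ∀ w : γ, prOf W w = ∑ v : β, prOf (fun ω => (V ω, W ω)) (v, w) := by
    intro w
    have hset : {ω | W ω = w} = ⋃ v : β, {ω | V ω = v ∧ W ω = w} := by
      ext ω
      simp
    have hdisj : Pairwise (Function.onFun Disjoint
        (fun v : β => {ω | V ω = v ∧ W ω = w})) := by
      intro v v' hvv'
      simp only [Function.onFun]
      rw [Set.disjoint_left]
      rintro ω ⟨h1, -⟩ ⟨h2, -⟩
      exact hvv' (h1 ▸ h2 ▸ rfl)
    have hU := measure_iUnion (μ := (ℙ : Measure Ω)) hdisj (fun v => hmeas v w)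
    rw [← hset, tsum_fintype] at hU
    unfold prOf
    rw [hU, ENNReal.toReal_sum (fun a _ => measure_ne_top _ _)]
    refine Finset.sum_congr rfl fun v _ => ?_
    exact (epair v w).symm
  -- pointwise claim
  have hpair : ∀ (v : β) (w : γ),
      prOf (fun ω => (V ω, W ω)) (v, w) *
        (-∑' r : ℝ, (prOf (fun ω => (R ω, (V ω, W ω))) (r, (v, w))
              / prOf (fun ω => (V ω, W ω)) (v, w)) *
            Real.log (prOf (fun ω => (R ω, (V ω, W ω))) (r, (v, w))
              / prOf (fun ω => (V ω, W ω)) (v, w)))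
      = prOf (fun ω => (V ω, W ω)) (v, w) *
        (-∑' r : ℝ, (prOf (fun ω => (R ω, W ω)) (r, w) / prOf W w) *
            Real.log (prOf (fun ω => (R ω, W ω)) (r, w) / prOf W w)) := by
    intro v w
    by_cases hvw : prOf (fun ω => (V ω, W ω)) (v, w) = 0
    · rw [hvw, zero_mul, zero_mul]
    · have hW : prOf W w ≠ 0 := by
        intro h0
        apply hvw
        have hsub : {ω | V ω = v ∧ W ω = w} ⊆ {ω | W ω = w} := fun ω h => h.2
        have hle := measure_mono (μ := (ℙ : Measure Ω)) hsub
        have hw0 : (ℙ : Measure Ω) {ω | W ω = w} = 0 := by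
          have hh := (ENNReal.toReal_eq_zero_iff _).mp h0
          rcases hh with h | h
          · exact h
          · exact absurd h (measure_ne_top _ _)
        have hv0 : (ℙ : Measure Ω) {ω | V ω = v ∧ W ω = w} = 0 :=
          le_antisymm (hw0 ▸ hle) zero_le
        rw [epair, hv0, ENNReal.toReal_zero]
      congr 2
      refine tsum_congr fun r => ?_
      have hq : prOf (fun ω => (R ω, (V ω, W ω))) (r, (v, w))
            / prOf (fun ω => (V ω, W ω)) (v, w)
          = prOf (fun ω => (R ω, W ω)) (r, w) / prOf W w := by
        rw [div_eq_div_iff hvw hW, etrip, erw, epair]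
        have := congrArg ENNReal.toReal (hci r v w)
        rw [ENNReal.toReal_mul, ENNReal.toReal_mul] at this
        exact this
      rw [hq]
  -- assemble
  simp only [condEntropy']
  rw [tsum_fintype, tsum_fintype, Fintype.sum_prod_type, Finset.sum_comm]
  refine Finset.sum_congr rfl fun w _ => ?_
  calc ∑ v : β, prOf (fun ω => (V ω, W ω)) (v, w) *
        (-∑' r : ℝ, (prOf (fun ω => (R ω, (V ω, W ω))) (r, (v, w))
              / prOf (fun ω => (V ω, W ω)) (v, w)) *
            Real.log (prOf (fun ω => (R ω, (V ω, W ω))) (r, (v, w))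
              / prOf (fun ω => (V ω, W ω)) (v, w)))
      = ∑ v : β, prOf (fun ω => (V ω, W ω)) (v, w) *
        (-∑' r : ℝ, (prOf (fun ω => (R ω, W ω)) (r, w) / prOf W w) *
            Real.log (prOf (fun ω => (R ω, W ω)) (r, w) / prOf W w)) :=
        Finset.sum_congr rfl fun v _ => hpair v w
    _ = (∑ v : β, prOf (fun ω => (V ω, W ω)) (v, w)) *
        (-∑' r : ℝ, (prOf (fun ω => (R ω, W ω)) (r, w) / prOf W w) *
            Real.log (prOf (fun ω => (R ω, W ω)) (r, w) / prOf W w)) := by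
        rw [Finset.sum_mul]
    _ = prOf W w *
        (-∑' r : ℝ, (prOf (fun ω => (R ω, W ω)) (r, w) / prOf W w) *
            Real.log (prOf (fun ω => (R ω, W ω)) (r, w) / prOf W w)) := by
        rw [← hmarg w]

/-- **Paper's Proposition 1.** Let `τ = (X 1, …, X T)` be the trajectory of per-timestep
joint state-action random variables of team `Tᵢ`, with values in finite sets, let
`R t = f t (X t)` be the deterministic team reward at time `t`, and `Z = ∑_k R k` the team
return.  Fix `t`, and assume that `R t` is conditionally independent of the future
components `(X_{t+1}, …, X_T)` given the past components `(X_1, …, X_{t−1})` (the Markov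
structure of the stochastic game).  Then the information of the joint policy at time `t`
equals the entropy of the team reward at time `t` given the trajectory up to time `t−1`:
`I(Z ; X t | X_{−t}) = H(R t | X_{1:t−1})`. -/
theorem condMutualInfo_return_eq_condEntropy_reward_given_past
    {Ω : Type*} [MeasureSpace Ω] [IsProbabilityMeasure (ℙ : Measure Ω)]
    {T : ℕ} (hT : 1 ≤ T)
    (S : Fin T → Type*) [∀ i, Fintype (S i)]
    [∀ i, MeasurableSpace (S i)] [∀ i, MeasurableSingletonClass (S i)]
    (X : ∀ i : Fin T, Ω → S i) (hX : ∀ i, Measurable (X i))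
    (f : ∀ i : Fin T, S i → ℝ) (t : Fin T)
    (hcondIndep : ∀ (r : ℝ) (fut : ∀ i : {i : Fin T // t < i}, S i)
        (past : ∀ i : {i : Fin T // i < t}, S i),
      (ℙ : Measure Ω) {ω | f t (X t ω) = r ∧ (fun i : {i : Fin T // t < i} => X i ω) = fut
            ∧ (fun i : {i : Fin T // i < t} => X i ω) = past}
          * (ℙ : Measure Ω) {ω | (fun i : {i : Fin T // i < t} => X i ω) = past}
        = (ℙ : Measure Ω) {ω | f t (X t ω) = r
              ∧ (fun i : {i : Fin T // i < t} => X i ω) = past}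
          * (ℙ : Measure Ω) {ω | (fun i : {i : Fin T // t < i} => X i ω) = fut
              ∧ (fun i : {i : Fin T // i < t} => X i ω) = past}) :
    condMutualInfo' (fun ω => ∑ k : Fin T, f k (X k ω)) (X t)
        (fun ω (i : {i : Fin T // i ≠ t}) => X i ω)
      = condEntropy' (fun ω => f t (X t ω))
          (fun ω (i : {i : Fin T // i < t}) => X i ω) := by
  classical
  have hsum : ∀ ω, ∑ k : Fin T, f k (X k ω)
      = f t (X t ω) + ∑ i : {i : Fin T // i ≠ t}, f i (X i ω) := by
    intro ω
    rw [← Finset.add_sum_erase _ _ (Finset.mem_univ t)]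
    congr 1
    rw [← Finset.sum_subtype (Finset.univ.erase t) (fun x => by simp)
      (fun k => f k (X k ω))]
  have h2 : condEntropy' (fun ω => ∑ k : Fin T, f k (X k ω))
      (fun ω => (X t ω, fun i : {i : Fin T // i ≠ t} => X i ω)) = 0 := by
    rw [show (fun ω => ∑ k : Fin T, f k (X k ω))
        = (fun ω => (fun p : S t × (∀ i : {i : Fin T // i ≠ t}, S i) =>
            f t p.1 + ∑ i : {i : Fin T // i ≠ t}, f i (p.2 i))
          ((fun ω => (X t ω, fun i : {i : Fin T // i ≠ t} => X i ω)) ω))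
      from funext fun ω => hsum ω]
    exact condEntropy'_comp
      (fun p : S t × (∀ i : {i : Fin T // i ≠ t}, S i) =>
        f t p.1 + ∑ i : {i : Fin T // i ≠ t}, f i (p.2 i))
      (fun ω => (X t ω, fun i : {i : Fin T // i ≠ t} => X i ω))
  have h1 : condEntropy' (fun ω => ∑ k : Fin T, f k (X k ω))
      (fun ω (i : {i : Fin T // i ≠ t}) => X i ω)
      = condEntropy' (fun ω => f t (X t ω))
          (fun ω (i : {i : Fin T // i ≠ t}) => X i ω) := by
    rw [show (fun ω => ∑ k : Fin T, f k (X k ω))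
        = (fun ω => (fun ω' => f t (X t ω')) ω
            + (fun m : ∀ i : {i : Fin T // i ≠ t}, S i =>
                ∑ i : {i : Fin T // i ≠ t}, f i (m i))
              ((fun ω' (i : {i : Fin T // i ≠ t}) => X i ω') ω))
      from funext fun ω => hsum ω]
    exact condEntropy'_add_fun (fun ω => f t (X t ω))
      (fun m : ∀ i : {i : Fin T // i ≠ t}, S i =>
        ∑ i : {i : Fin T // i ≠ t}, f i (m i))
      (fun ω (i : {i : Fin T // i ≠ t}) => X i ω)
  have h3 := condEntropy'_comp_inj (fun ω => f t (X t ω))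
    (fun ω (i : {i : Fin T // i ≠ t}) => X i ω)
    (fun m => ((fun i : {i : Fin T // t < i} => m ⟨i.1, i.2.ne'⟩),
               (fun i : {i : Fin T // i < t} => m ⟨i.1, i.2.ne⟩)))
    (by
      intro m m' h
      funext i
      rcases (Ne.lt_or_gt i.2) with hlt | hlt
      · exact congrFun (congrArg Prod.snd h) ⟨i.1, hlt⟩
      · exact congrFun (congrArg Prod.fst h) ⟨i.1, hlt⟩)
  have h4 : condEntropy' (fun ω => f t (X t ω))
      (fun ω => ((fun i : {i : Fin T // t < i} => X i ω),
                 (fun i : {i : Fin T // i < t} => X i ω)))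
      = condEntropy' (fun ω => f t (X t ω))
          (fun ω (i : {i : Fin T // i < t}) => X i ω) := by
    apply condEntropy'_of_condIndep
    · intro v w
      have hset : {ω | (fun i : {i : Fin T // t < i} => X i ω) = v
            ∧ (fun i : {i : Fin T // i < t} => X i ω) = w}
          = (⋂ i : {i : Fin T // t < i}, {ω | X i ω = v i})
            ∩ ⋂ i : {i : Fin T // i < t}, {ω | X i ω = w i} := by
        ext ω
        simp [funext_iff, Set.mem_iInter]
      rw [hset]
      exact (MeasurableSet.iInter fun i : {i : Fin T // t < i} =>
          (hX i.1) (measurableSet_singleton (v i))).inter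
        (MeasurableSet.iInter fun i : {i : Fin T // i < t} =>
          (hX i.1) (measurableSet_singleton (w i)))
    · exact hcondIndep
  unfold condMutualInfo'
  rw [h2, sub_zero, h1, ← h3]
  exact h4
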